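/- Every symmetric positive definite symplectic 2n×2n real matrix A has a spectral decomposition A = Q · diag(D, D⁻¹) · Qᵀ, where Q is a 2n×2n orthogonal symplectic matrix, D = diag(d₁, …, dₙ) is a diagonal n×n matrix with d₁ ≥ d₂ ≥ … ≥ dₙ ≥ 1, and diag(D, D⁻¹) denotes the block diagonal matrix with blocks D and D⁻¹. -/

import Mathlib

open Matrix

/-- The standard symplectic matrix `J = [[0, I], [-I, 0]]`. -/
noncomputable def symplJ (n : ℕ) : Matrix (Fin n ⊕ Fin n) (Fin n ⊕ Fin n) ℝ :=
  Matrix.fromBlocks 0 1 (-1) 0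


open Module Module.End RealInnerProductSpace


lemma key_aux {E : Type*} [NormedAddCommGroup E] [InnerProductSpace ℝ E] [FiniteDimensional ℝ E]
    (T Jl : E →ₗ[ℝ] E) (hT : T.IsSymmetric)
    (hpos : ∀ x : E, x ≠ 0 → 0 < ⟪T x, x⟫)
    (hJin : ∀ x y : E, ⟪Jl x, Jl y⟫ = ⟪x, y⟫)
    (hJsk : ∀ x y : E, ⟪Jl x, y⟫ = -⟪x, Jl y⟫)
    (hTJT : ∀ x, T (Jl (T x)) = Jl x) :
    ∀ (m : ℕ) (U : Submodule ℝ E), (∀ x ∈ U, Jl x ∈ U) → (∀ x ∈ U, T x ∈ U) →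
      finrank ℝ U = 2 * m →
      ∃ (d : Fin m → ℝ) (v : Fin m → E),
        Antitone d ∧ (∀ i, 1 ≤ d i) ∧ (∀ i, v i ∈ U) ∧
        (∀ i j, ⟪v i, v j⟫ = if i = j then 1 else 0) ∧
        (∀ i j, ⟪v i, Jl (v j)⟫ = 0) ∧
        (∀ i, T (v i) = d i • v i) := by
  have hself : ∀ y : E, ⟪y, Jl y⟫ = 0 := by
    intro y
    have h1 := hJsk y y
    have h2 := real_inner_comm (Jl y) y
    linarith
  have hJnorm : ∀ x : E, ‖Jl x‖ = ‖x‖ := by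
    intro x
    rw [@norm_eq_sqrt_re_inner ℝ, @norm_eq_sqrt_re_inner ℝ, hJin]
  intro m
  induction m with
  | zero =>
    intro U _ _ _
    refine ⟨finZeroElim, finZeroElim, ?_, ?_, ?_, ?_, ?_, ?_⟩ <;>
      first
        | (intro i j; exact i.elim0)
        | (intro i; exact i.elim0)
        | (intro i j _; exact i.elim0)
  | succ m ih =>
    intro U hJU hTU hrank
    haveI : Nontrivial U := nontrivial_of_finrank_pos (R := ℝ) (by omega)
    set T' := T.restrict hTU with hT'def
    have hT' : T'.IsSymmetric := hT.restrict_invariant hTU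
    set μ : ℝ := ⨆ x : { x : U // x ≠ 0 }, RCLike.re (⟪T' x, (x : U)⟫) / ‖(x : U)‖ ^ 2 with hμdef
    have hev : HasEigenvalue T' ↑μ := hT'.hasEigenvalue_iSup_of_finiteDimensional
    have hbdd : BddAbove (Set.range fun x : { x : U // x ≠ 0 } =>
        RCLike.re (⟪T' x, (x : U)⟫) / ‖(x : U)‖ ^ 2) := by
      refine ⟨‖LinearMap.toContinuousLinearMap T'‖, ?_⟩
      rintro y ⟨x, rfl⟩
      have hx : (0:ℝ) < ‖(x : U)‖ := norm_pos_iff.2 x.2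
      have h1 : ⟪T' x, (x:U)⟫ ≤ ‖T' (x:U)‖ * ‖(x:U)‖ := real_inner_le_norm _ _
      have h2 : ‖T' (x:U)‖ ≤ ‖LinearMap.toContinuousLinearMap T'‖ * ‖(x:U)‖ :=
        (LinearMap.toContinuousLinearMap T').le_opNorm _
      simp only [RCLike.re_to_real]
      rw [div_le_iff₀ (by positivity)]
      nlinarith [norm_nonneg (T' (x:U))]
    have hle : ∀ x : U, x ≠ 0 → ⟪T' x, (x:U)⟫ / ‖(x:U)‖ ^ 2 ≤ μ := by
      intro x hx
      have := le_ciSup hbdd (⟨x, hx⟩ : { x : U // x ≠ 0 })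
      simpa [hμdef] using this
    obtain ⟨u, huv⟩ := hev.exists_hasEigenvector
    have hue : T' u = μ • u := by
      have := huv.apply_eq_smul
      simpa using this
    have hu0 : (u : E) ≠ 0 := fun h => huv.2 (Subtype.coe_injective (by simpa using h))
    have huE : T (u : E) = μ • (u : E) := by
      have : ((T' u : U) : E) = ((μ • u : U) : E) := congrArg _ hue
      simpa [hT'def, LinearMap.restrict_coe_apply] using this
    have hμpos : 0 < μ := by
      have h1 : (0:ℝ) < ⟪T (u:E), (u:E)⟫ := hpos _ hu0
      rw [huE, real_inner_smul_left] at h1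
      have h2 : (0:ℝ) ≤ ⟪(u:E), (u:E)⟫ := real_inner_self_nonneg
      nlinarith
    have hμne : μ ≠ 0 := ne_of_gt hμpos
    set v₀ : E := ‖(u : E)‖⁻¹ • (u : E) with hv₀def
    have hv₀U : v₀ ∈ U := U.smul_mem _ u.2
    have hv₀norm : ‖v₀‖ = 1 := norm_smul_inv_norm hu0
    have hv₀ne : v₀ ≠ 0 := fun h => by simp [h] at hv₀norm
    have hv₀inner : ⟪v₀, v₀⟫ = 1 := by
      rw [real_inner_self_eq_norm_sq, hv₀norm]; norm_num
    have hv₀eig : T v₀ = μ • v₀ := by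
      rw [hv₀def, T.map_smul, huE, smul_comm]
    have hJv₀eig : T (Jl v₀) = μ⁻¹ • Jl v₀ := by
      have h := hTJT v₀
      rw [hv₀eig, Jl.map_smul, T.map_smul] at h
      rw [eq_inv_smul_iff₀ hμne]
      exact h
    have hJv₀U : Jl v₀ ∈ U := hJU _ hv₀U
    have hJv₀norm : ‖Jl v₀‖ = 1 := by rw [hJnorm, hv₀norm]
    have hJv₀ne : Jl v₀ ≠ 0 := fun h => by simp [h] at hJv₀norm
    clear hv₀def hμdef huE hue huv hu0
    clear_value v₀ μ
    have hμ1 : (1:ℝ) ≤ μ := by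
      set w : U := ⟨Jl v₀, hJv₀U⟩ with hwdef
      have hw0 : w ≠ 0 := fun h => hJv₀ne (by simpa [hwdef] using congrArg (Subtype.val) h)
      have hray := hle w hw0
      have hTw : T' w = μ⁻¹ • w := by
        apply Subtype.coe_injective
        simpa [hT'def, LinearMap.restrict_coe_apply, hwdef] using hJv₀eig
      have hnw : ‖w‖ = 1 := hJv₀norm
      have hiw : ⟪w, w⟫ = (1:ℝ) := by
        rw [real_inner_self_eq_norm_sq, hnw]; norm_num
      rw [hTw, real_inner_smul_left, hiw, hnw] at hray
      simp only [mul_one, one_pow, div_one] at hray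
      nlinarith [mul_inv_cancel₀ hμne, mul_pos hμpos hμpos, sq_nonneg (μ - 1), sq_nonneg (μ + 1)]
    set W₂ : Submodule ℝ E := (ℝ ∙ v₀) ⊔ (ℝ ∙ (Jl v₀)) with hW₂def
    have hWU : W₂ ≤ U := sup_le ((Submodule.span_singleton_le_iff_mem _ _).2 hv₀U)
      ((Submodule.span_singleton_le_iff_mem _ _).2 hJv₀U)
    have hv₀W : v₀ ∈ W₂ := Submodule.mem_sup_left (Submodule.mem_span_singleton_self _)
    have hJv₀W : Jl v₀ ∈ W₂ := Submodule.mem_sup_right (Submodule.mem_span_singleton_self _)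
    have hmemW : ∀ x : E, x ∈ W₂ᗮ ↔ ⟪v₀, x⟫ = 0 ∧ ⟪Jl v₀, x⟫ = 0 := by
      intro x
      constructor
      · intro h
        exact ⟨(Submodule.mem_orthogonal W₂ x).1 h _ hv₀W,
          (Submodule.mem_orthogonal W₂ x).1 h _ hJv₀W⟩
      · rintro ⟨h1, h2⟩
        rw [Submodule.mem_orthogonal]
        intro y hy
        rw [hW₂def, Submodule.mem_sup] at hy
        obtain ⟨a, ha, b, hb, rfl⟩ := hy
        obtain ⟨ca, rfl⟩ := Submodule.mem_span_singleton.1 ha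
        obtain ⟨cb, rfl⟩ := Submodule.mem_span_singleton.1 hb
        have he : ⟪ca • v₀ + cb • Jl v₀, x⟫ = ca * ⟪v₀, x⟫ + cb * ⟪Jl v₀, x⟫ := by
          rw [inner_add_left, real_inner_smul_left, real_inner_smul_left]
        rw [he, h1, h2]
        ring
    set U₁ : Submodule ℝ E := W₂ᗮ ⊓ U with hU₁def
    have hU₁U : U₁ ≤ U := inf_le_right
    have hU₁W : U₁ ≤ W₂ᗮ := inf_le_left
    have hJU₁ : ∀ x ∈ U₁, Jl x ∈ U₁ := by
      intro x hx
      obtain ⟨hxW, hxU⟩ := Submodule.mem_inf.1 hx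
      replace hxW := (hmemW x).1 hxW
      refine ⟨(hmemW _).2 ⟨?_, ?_⟩, hJU _ hxU⟩
      · have h1 := hJsk v₀ x
        have h2 := real_inner_comm (Jl v₀) x
        linarith [hxW.2]
      · have h1 := hJin v₀ x
        have h2 := real_inner_comm v₀ x
        have h3 := real_inner_comm (Jl v₀) (Jl x)
        have h4 := hJsk (Jl v₀) x
        have h5 := real_inner_comm (Jl (Jl v₀)) x
        -- ⟪Jl v₀, Jl x⟫ = ⟪v₀, x⟫ = 0
        have : ⟪Jl v₀, Jl x⟫ = 0 := by rw [hJin]; linarith [hxW.1]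
        linarith
    have hTU₁ : ∀ x ∈ U₁, T x ∈ U₁ := by
      intro x hx
      obtain ⟨hxW, hxU⟩ := Submodule.mem_inf.1 hx
      replace hxW := (hmemW x).1 hxW
      refine ⟨(hmemW _).2 ⟨?_, ?_⟩, hTU _ hxU⟩
      · have h1 : ⟪T v₀, x⟫ = ⟪v₀, T x⟫ := hT v₀ x
        rw [hv₀eig, real_inner_smul_left, hxW.1] at h1
        rw [← h1]; ring
      · have h1 : ⟪T (Jl v₀), x⟫ = ⟪Jl v₀, T x⟫ := hT (Jl v₀) x
        rw [hJv₀eig, real_inner_smul_left, hxW.2] at h1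
        rw [← h1]; ring
    have hspan1 : finrank ℝ (ℝ ∙ v₀) = 1 := finrank_span_singleton hv₀ne
    have hspan2 : finrank ℝ (ℝ ∙ (Jl v₀)) = 1 := finrank_span_singleton hJv₀ne
    have hinfbot : (ℝ ∙ v₀) ⊓ (ℝ ∙ (Jl v₀)) = ⊥ := by
      rw [Submodule.eq_bot_iff]
      rintro x ⟨hx1, hx2⟩
      obtain ⟨a, rfl⟩ := Submodule.mem_span_singleton.1 hx1
      obtain ⟨b, hb⟩ := Submodule.mem_span_singleton.1 hx2
      have h1 : ⟪a • v₀, a • v₀⟫ = a * b * ⟪v₀, Jl v₀⟫ := by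
        nth_rewrite 2 [← hb]
        rw [real_inner_smul_left, real_inner_smul_right]; ring
      rw [hself, mul_zero] at h1
      exact inner_self_eq_zero.1 h1
    have hW₂rank : finrank ℝ W₂ = 2 := by
      have h := Submodule.finrank_sup_add_finrank_inf_eq (ℝ ∙ v₀) (ℝ ∙ (Jl v₀))
      rw [← hW₂def, hinfbot, hspan1, hspan2, finrank_bot] at h
      omega
    have hU₁rank : finrank ℝ U₁ = 2 * m := by
      have h := Submodule.finrank_add_inf_finrank_orthogonal (𝕜 := ℝ) hWU
      rw [← hU₁def] at h
      rw [hW₂rank, hrank] at h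
      omega
    obtain ⟨d', v', hd'anti, hd'1, hv'U, hv'on, hv'J, hv'eig⟩ := ih U₁ hJU₁ hTU₁ hU₁rank
    have hv'Umem : ∀ i, v' i ∈ U := fun i => hU₁U (hv'U i)
    have hv'W : ∀ i, v' i ∈ W₂ᗮ := fun i => hU₁W (hv'U i)
    have hv'inner : ∀ i, ⟪v' i, v' i⟫ = (1:ℝ) := by
      intro i; have := hv'on i i; simpa using this
    have hv'ne : ∀ i, v' i ≠ 0 := by
      intro i h
      have h2 := hv'inner i
      rw [h, inner_zero_left] at h2
      norm_num at h2
    have hv'norm2 : ∀ i, ‖v' i‖ ^ 2 = 1 := by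
      intro i
      rw [← real_inner_self_eq_norm_sq, hv'inner]
    have hd'le : ∀ i, d' i ≤ μ := by
      intro i
      set x : U := ⟨v' i, hv'Umem i⟩ with hxdef
      have hx0 : x ≠ 0 := fun h => hv'ne i (by simpa [hxdef] using congrArg Subtype.val h)
      have hray := hle x hx0
      have hTx : T' x = d' i • x := by
        apply Subtype.coe_injective
        simpa [hT'def, LinearMap.restrict_coe_apply, hxdef] using hv'eig i
      have hnx : ‖x‖ ^ 2 = 1 := hv'norm2 i
      rw [hTx, real_inner_smul_left] at hray
      have hix : ⟪x, x⟫ = (1:ℝ) := hv'inner i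
      rw [hix, hnx] at hray
      simpa using hray
    refine ⟨Fin.cons μ d', Fin.cons v₀ v', ?_, ?_, ?_, ?_, ?_, ?_⟩
    · intro i j hij
      rcases Fin.eq_zero_or_eq_succ i with rfl | ⟨i', rfl⟩
      · rcases Fin.eq_zero_or_eq_succ j with rfl | ⟨j', rfl⟩
        · exact le_refl _
        · simpa using hd'le j'
      · rcases Fin.eq_zero_or_eq_succ j with rfl | ⟨j', rfl⟩
        · exact absurd hij (by simp [Fin.le_def])
        · simpa using hd'anti (Fin.succ_le_succ_iff.1 hij)
    · intro i
      rcases Fin.eq_zero_or_eq_succ i with rfl | ⟨i', rfl⟩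
      · simpa using hμ1
      · simpa using hd'1 i'
    · intro i
      rcases Fin.eq_zero_or_eq_succ i with rfl | ⟨i', rfl⟩
      · simpa using hv₀U
      · simpa using hv'Umem i'
    · intro i j
      rcases Fin.eq_zero_or_eq_succ i with rfl | ⟨i', rfl⟩
      · rcases Fin.eq_zero_or_eq_succ j with rfl | ⟨j', rfl⟩
        · simpa using hv₀inner
        · have h := (Submodule.mem_orthogonal W₂ _).1 (hv'W j') _ hv₀W
          simp [(Fin.succ_ne_zero j').symm, h]
      · rcases Fin.eq_zero_or_eq_succ j with rfl | ⟨j', rfl⟩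
        · have h := (Submodule.mem_orthogonal W₂ _).1 (hv'W i') _ hv₀W
          rw [real_inner_comm] at h
          simp [Fin.succ_ne_zero, h]
        · have h := hv'on i' j'
          simp only [Fin.cons_succ]
          rw [h]
          simp [Fin.succ_inj]
    · intro i j
      rcases Fin.eq_zero_or_eq_succ i with rfl | ⟨i', rfl⟩
      · rcases Fin.eq_zero_or_eq_succ j with rfl | ⟨j', rfl⟩
        · simpa using hself v₀
        · have h := (Submodule.mem_orthogonal W₂ _).1 (hv'W j') _ hJv₀W
          have h2 := hJsk v₀ (v' j')
          have h3 := real_inner_comm (Jl v₀) (v' j')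
          simp only [Fin.cons_zero, Fin.cons_succ]
          linarith
      · rcases Fin.eq_zero_or_eq_succ j with rfl | ⟨j', rfl⟩
        · have h := (Submodule.mem_orthogonal W₂ _).1 (hv'W i') _ hJv₀W
          rw [real_inner_comm] at h
          simpa using h
        · simpa using hv'J i' j'
    · intro i
      rcases Fin.eq_zero_or_eq_succ i with rfl | ⟨i', rfl⟩
      · simpa using hv₀eig
      · simpa using hv'eig i'

/-- Every symmetric positive definite symplectic `2n × 2n` real matrix `A` has a
spectral decomposition `A = Q · diag(D, D⁻¹) · Qᵀ` with `Q` orthogonal symplectic and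
`D = diag(d₁, …, dₙ)`, `d₁ ≥ d₂ ≥ … ≥ dₙ ≥ 1`. -/
theorem posDef_symplectic_spectral_decomposition (n : ℕ)
    (A : Matrix (Fin n ⊕ Fin n) (Fin n ⊕ Fin n) ℝ)
    (hsym : Aᵀ = A) (hpd : A.PosDef)
    (hsympl : Aᵀ * symplJ n * A = symplJ n) :
    ∃ (Q : Matrix (Fin n ⊕ Fin n) (Fin n ⊕ Fin n) ℝ) (d : Fin n → ℝ),
      Qᵀ * Q = 1 ∧ Qᵀ * symplJ n * Q = symplJ n ∧
        Antitone d ∧ (∀ i, 1 ≤ d i) ∧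
        A = Q * Matrix.fromBlocks (Matrix.diagonal d) 0 0
              (Matrix.diagonal fun i => (d i)⁻¹) * Qᵀ := by
  classical
  have hAJA : A * symplJ n * A = symplJ n := by
    have h := hsympl; rwa [hsym] at h
  have hJt : (symplJ n)ᵀ = -symplJ n := by
    rw [symplJ, Matrix.fromBlocks_transpose, Matrix.fromBlocks_neg]
    congr 1 <;> simp
  have hJJ : symplJ n * symplJ n = -1 := by
    rw [symplJ, Matrix.fromBlocks_multiply, ← Matrix.fromBlocks_one, Matrix.fromBlocks_neg]
    congr 1 <;> simp
  have hJtJ : (symplJ n)ᵀ * symplJ n = 1 := by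
    rw [hJt, neg_mul, hJJ, neg_neg]
  -- bridging to Euclidean space
  have happ : ∀ (M : Matrix (Fin n ⊕ Fin n) (Fin n ⊕ Fin n) ℝ)
      (x : EuclideanSpace ℝ (Fin n ⊕ Fin n)) (i),
      (Matrix.toEuclideanLin M x) i = (M *ᵥ (fun j => x j)) i := fun _ _ _ => rfl
  have happ' : ∀ (M : Matrix (Fin n ⊕ Fin n) (Fin n ⊕ Fin n) ℝ)
      (x : EuclideanSpace ℝ (Fin n ⊕ Fin n)),
      (fun i => (Matrix.toEuclideanLin M x) i) = M *ᵥ (fun j => x j) := fun M x =>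
    funext (happ M x)
  have hip : ∀ x y : EuclideanSpace ℝ (Fin n ⊕ Fin n),
      ⟪x, y⟫ = (fun i => x i) ⬝ᵥ (fun i => y i) := fun x y => by
    simp [PiLp.inner_apply, dotProduct, RCLike.inner_apply, conj_trivial, mul_comm]
  have hTsym : (Matrix.toEuclideanLin A).IsSymmetric := by
    intro x y
    rw [hip, hip, happ' A x, happ' A y]
    rw [dotProduct_mulVec]
    conv_lhs => rw [← vecMul_transpose, hsym]
  have hpos : ∀ x : EuclideanSpace ℝ (Fin n ⊕ Fin n), x ≠ 0 →
      0 < ⟪Matrix.toEuclideanLin A x, x⟫ := by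
    intro x hx
    rw [hip, happ' A x]
    have hx' : (fun j => x j) ≠ 0 := by
      intro h
      apply hx
      ext i
      exact congrFun h i
    have := hpd.dotProduct_mulVec_pos (x := fun j => x j) hx'
    rw [show star (fun j => x j) = (fun j => x j) from star_trivial _] at this
    rwa [dotProduct_comm] at this
  have hJin : ∀ x y : EuclideanSpace ℝ (Fin n ⊕ Fin n),
      ⟪Matrix.toEuclideanLin (symplJ n) x, Matrix.toEuclideanLin (symplJ n) y⟫ = ⟪x, y⟫ := by
    intro x y
    rw [hip, hip, happ' _ x, happ' _ y]
    rw [dotProduct_mulVec, vecMul_mulVec, hJtJ, vecMul_one]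
  have hJsk : ∀ x y : EuclideanSpace ℝ (Fin n ⊕ Fin n),
      ⟪Matrix.toEuclideanLin (symplJ n) x, y⟫ = -⟪x, Matrix.toEuclideanLin (symplJ n) y⟫ := by
    intro x y
    rw [hip, hip, happ' _ x, happ' _ y]
    rw [dotProduct_mulVec]
    conv_lhs => rw [← vecMul_transpose, hJt, vecMul_neg, neg_dotProduct]
  have hTJT : ∀ x : EuclideanSpace ℝ (Fin n ⊕ Fin n),
      Matrix.toEuclideanLin A (Matrix.toEuclideanLin (symplJ n) (Matrix.toEuclideanLin A x))
        = Matrix.toEuclideanLin (symplJ n) x := by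
    intro x
    ext i
    rw [happ, happ]
    rw [show (fun j => (Matrix.toEuclideanLin (symplJ n) (Matrix.toEuclideanLin A x)) j)
      = symplJ n *ᵥ (fun j => (Matrix.toEuclideanLin A x) j) from happ' _ _]
    rw [happ' A x, mulVec_mulVec, mulVec_mulVec, hAJA]
  have hrank : finrank ℝ (⊤ : Submodule ℝ (EuclideanSpace ℝ (Fin n ⊕ Fin n))) = 2 * n := by
    rw [finrank_top, finrank_euclideanSpace]
    simp [two_mul]
  obtain ⟨d, v, hanti, hd1, -, hon, hJiso, heig⟩ :=
    key_aux (Matrix.toEuclideanLin A) (Matrix.toEuclideanLin (symplJ n)) hTsym hpos hJin hJsk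
      hTJT n ⊤ (fun x _ => trivial) (fun x _ => trivial) hrank
  -- build the matrix V of eigen-columns
  set V : Matrix (Fin n ⊕ Fin n) (Fin n) ℝ := Matrix.of (fun j i => v i j) with hVdef
  have hVtV : Vᵀ * V = 1 := by
    ext i j
    have h := hon i j
    rw [hip] at h
    simp only [Matrix.mul_apply, Matrix.transpose_apply, hVdef, Matrix.of_apply,
      Matrix.one_apply]
    simpa [dotProduct] using h
  have hVJV : Vᵀ * (symplJ n * V) = 0 := by
    ext i j
    have h := hJiso i j
    rw [hip, happ' _ (v j)] at h
    simp only [Matrix.mul_apply, Matrix.transpose_apply, hVdef, Matrix.of_apply,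
      Matrix.zero_apply]
    simp only [Matrix.mulVec, dotProduct] at h
    simpa [dotProduct] using h
  have hAV : A * V = V * Matrix.diagonal d := by
    ext k i
    have hk : (A *ᵥ (fun j => v i j)) k = d i * v i k := by
      rw [← happ A (v i) k, heig i]
      rfl
    rw [Matrix.mul_diagonal]
    simp only [Matrix.mulVec, dotProduct] at hk
    simp only [Matrix.mul_apply, hVdef, Matrix.of_apply]
    rw [hk]
    ring
  -- diagonal facts
  have hdne : ∀ i, d i ≠ 0 := fun i => by have := hd1 i; positivity
  have hDD : Matrix.diagonal d * Matrix.diagonal (fun i => (d i)⁻¹) = 1 := by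
    rw [Matrix.diagonal_mul_diagonal]
    rw [show (fun i => d i * (d i)⁻¹) = fun _ => (1:ℝ) from funext fun i => mul_inv_cancel₀ (hdne i)]
    exact Matrix.diagonal_one
  -- W = -J V
  set Wm : Matrix (Fin n ⊕ Fin n) (Fin n) ℝ := (-symplJ n) * V with hWmdef
  have hWt : Wmᵀ = Vᵀ * symplJ n := by
    rw [hWmdef, Matrix.transpose_mul, Matrix.transpose_neg, hJt, neg_neg]
  have hJWm : symplJ n * Wm = V := by
    rw [hWmdef, Matrix.neg_mul, Matrix.mul_neg, ← Matrix.mul_assoc, hJJ, Matrix.neg_mul,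
      Matrix.one_mul, neg_neg]
  have hJV2 : symplJ n * (symplJ n * V) = -V := by
    rw [← Matrix.mul_assoc, hJJ, Matrix.neg_mul, Matrix.one_mul]
  have hAW : A * Wm = Wm * Matrix.diagonal (fun i => (d i)⁻¹) := by
    have hV' : V = A * V * Matrix.diagonal (fun i => (d i)⁻¹) := by
      rw [hAV, Matrix.mul_assoc, hDD, Matrix.mul_one]
    have key2 : A * (symplJ n * V) = symplJ n * (V * Matrix.diagonal fun i => (d i)⁻¹) := by
      calc A * (symplJ n * V)
          = A * (symplJ n * (A * V * Matrix.diagonal fun i => (d i)⁻¹)) := by rw [← hV']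
        _ = A * (symplJ n * (A * (V * Matrix.diagonal fun i => (d i)⁻¹))) := by
            rw [Matrix.mul_assoc A V]
        _ = A * symplJ n * A * (V * Matrix.diagonal fun i => (d i)⁻¹) := by
            rw [Matrix.mul_assoc (A * symplJ n), Matrix.mul_assoc A (symplJ n)]
        _ = symplJ n * (V * Matrix.diagonal fun i => (d i)⁻¹) := by rw [hAJA]
    calc A * Wm = A * (-symplJ n * V) := by rw [hWmdef]
      _ = -(A * (symplJ n * V)) := by rw [Matrix.neg_mul, Matrix.mul_neg]
      _ = -(symplJ n * (V * Matrix.diagonal fun i => (d i)⁻¹)) := by rw [key2]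
      _ = Wm * Matrix.diagonal (fun i => (d i)⁻¹) := by
          rw [hWmdef, Matrix.neg_mul, Matrix.neg_mul, Matrix.mul_assoc]
  set Q : Matrix (Fin n ⊕ Fin n) (Fin n ⊕ Fin n) ℝ := Matrix.fromCols V Wm with hQdef
  have hQt : Qᵀ = Matrix.fromRows Vᵀ Wmᵀ := Matrix.transpose_fromCols V Wm
  -- orthogonality
  have hWtW : Wmᵀ * Wm = 1 := by
    rw [hWt, Matrix.mul_assoc, hJWm, hVtV]
  have hVtW : Vᵀ * Wm = 0 := by
    rw [hWmdef, Matrix.neg_mul, Matrix.mul_neg, hVJV, neg_zero]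
  have hWtV : Wmᵀ * V = 0 := by
    rw [hWt, Matrix.mul_assoc, hVJV]
  have hQtQ : Qᵀ * Q = 1 := by
    rw [hQt, hQdef, Matrix.fromRows_mul_fromCols, hVtV, hVtW, hWtV, hWtW,
      ← Matrix.fromBlocks_one]
  -- symplectic property
  have hQJQ : Qᵀ * symplJ n * Q = symplJ n := by
    rw [hQt, hQdef, Matrix.mul_assoc]
    rw [show symplJ n * Matrix.fromCols V Wm = Matrix.fromCols (symplJ n * V) (symplJ n * Wm)
      from Matrix.mul_fromCols _ _ _]
    rw [Matrix.fromRows_mul_fromCols]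
    have h11 : Vᵀ * (symplJ n * V) = 0 := hVJV
    have h12 : Vᵀ * (symplJ n * Wm) = 1 := by rw [hJWm, hVtV]
    have h21 : Wmᵀ * (symplJ n * V) = -1 := by
      rw [hWt, Matrix.mul_assoc, hJV2, Matrix.mul_neg, hVtV]
    have h22 : Wmᵀ * (symplJ n * Wm) = 0 := by rw [hJWm, hWtV]
    rw [h11, h12, h21, h22]
    rfl
  have hQQt : Q * Qᵀ = 1 := mul_eq_one_comm.mp hQtQ
  have hAQ : A * Q = Q * Matrix.fromBlocks (Matrix.diagonal d) 0 0
      (Matrix.diagonal fun i => (d i)⁻¹) := by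
    rw [hQdef, Matrix.mul_fromCols, Matrix.fromCols_mul_fromBlocks, hAV, hAW]
    simp
  refine ⟨Q, d, hQtQ, hQJQ, hanti, hd1, ?_⟩
  calc A = A * (Q * Qᵀ) := by rw [hQQt, Matrix.mul_one]
    _ = A * Q * Qᵀ := by rw [Matrix.mul_assoc]
    _ = Q * Matrix.fromBlocks (Matrix.diagonal d) 0 0 (Matrix.diagonal fun i => (d i)⁻¹) * Qᵀ := by
        rw [hAQ]
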